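/- Let G act by automorphisms on a simplicial poset P. Then the quotient P/G is a simplicial poset if and only if the action is translative. -/
import Mathlib


/-- The order relation on the set of `G`-orbits of a poset `P`:
`X ≤ Y` iff some representative of `X` lies below some representative of `Y`
(for order-preserving actions this is the relation `Gp ≤ Gq ↔ ∃ g, g • p ≤ q`). -/
def QLe {G P : Type*} [Group G] [Preorder P] [MulAction G P]
    (X Y : Quotient (MulAction.orbitRel G P)) : Prop :=
  ∃ p q : P, Quotient.mk (MulAction.orbitRel G P) p = X ∧
    Quotient.mk (MulAction.orbitRel G P) q = Y ∧ p ≤ q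

lemma mk_eq_mk_iff {G P : Type*} [Group G] [MulAction G P] (a b : P) :
    Quotient.mk (MulAction.orbitRel G P) a = Quotient.mk (MulAction.orbitRel G P) b ↔
      ∃ g : G, g • b = a := by
  rw [Quotient.eq]
  exact (MulAction.orbitRel_apply).trans MulAction.mem_orbit_iff

lemma move_le {G P : Type*} [Group G] [PartialOrder P] [MulAction G P]
    (hact : ∀ (g : G) (x y : P), x ≤ y ↔ g • x ≤ g • y) (g h : G) (x y : P)
    (hxy : g • x ≤ h • y) : (h⁻¹ * g) • x ≤ y := by
  rw [hact h⁻¹, smul_smul] at hxy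
  simpa [mul_assoc] using hxy

section Reverse
variable {G P : Type*} [Group G] [PartialOrder P] [OrderBot P] [MulAction G P]
variable (hact : ∀ (g : G) (x y : P), x ≤ y ↔ g • x ≤ g • y)

include hact in
lemma smul_bot_fix (g : G) : g • (⊥ : P) = ⊥ := by
  have h : g • (⊥ : P) ≤ ⊥ := by
    rw [hact g⁻¹, inv_smul_smul]; exact bot_le
  exact le_antisymm h bot_le

include hact in
lemma reverse_main
    (hsimp : ∀ p : P, ∃ m : ℕ, Nonempty (Set.Iic p ≃o Finset (Fin m)))
    (hbool : ∀ X : Quotient (MulAction.orbitRel G P), ∃ m : ℕ,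
        ∃ e : {Y : Quotient (MulAction.orbitRel G P) // QLe Y X} ≃ Finset (Fin m),
          ∀ A B : {Y : Quotient (MulAction.orbitRel G P) // QLe Y X},
            QLe A.1 B.1 ↔ e A ≤ e B) :
    ∀ (p : P) (g : G), (∃ u : P, p ≤ u ∧ g • p ≤ u) → g • p = p := by
  have hfin : ∀ q : P, (Set.Iic q).Finite := by
    intro q
    obtain ⟨m, ⟨ι⟩⟩ := hsimp q
    have : Finite (Set.Iic q) := Finite.of_equiv _ ι.toEquiv.symm
    exact Set.finite_coe_iff.mp this
  have key : ∀ (N : ℕ) (p : P), (Set.Iic p).ncard ≤ N →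
      ∀ (g : G) (u : P), p ≤ u → g • p ≤ u → g • p = p := by
    intro N
    induction N with
    | zero =>
      intro p hN
      have : 0 < (Set.Iic p).ncard := (Set.ncard_pos (hfin p)).mpr ⟨p, Set.mem_Iic.mpr le_rfl⟩
      omega
    | succ N IH =>
      intro p hN g u hpu hgpu
      by_cases hp0 : p = ⊥
      · subst hp0; exact smul_bot_fix hact g
      obtain ⟨k, ⟨ι⟩⟩ := hsimp u
      -- the bottom of Iic u maps to ∅
      have hι0 : ι ⟨⊥, bot_le⟩ = ∅ := by
        have h1 : (⟨⊥, bot_le⟩ : Set.Iic u) ≤ ι.symm ∅ := bot_le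
        have h2 : ι ⟨⊥, bot_le⟩ ≤ ι (ι.symm ∅) := ι.le_iff_le.mpr h1
        rw [ι.apply_symm_apply] at h2
        exact Finset.subset_empty.mp h2
      -- atoms map to singletons
      have hsing : ∀ (q : P) (hq : q ≤ u), q ≠ ⊥ → (∀ x, x ≤ q → x = ⊥ ∨ x = q) →
          ∃ i : Fin k, ι ⟨q, hq⟩ = {i} := by
        intro q hq hq0 hqa
        have hsub : ∀ t ⊆ ι ⟨q, hq⟩, t = ∅ ∨ t = ι ⟨q, hq⟩ := by
          intro t ht
          have hx : ι.symm t ≤ ⟨q, hq⟩ := by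
            have h2 : ι.symm t ≤ ι.symm (ι ⟨q, hq⟩) := ι.symm.le_iff_le.mpr ht
            rwa [ι.symm_apply_apply] at h2
          rcases hqa (ι.symm t).1 hx with h | h
          · left
            have h3 : ι.symm t = ⟨⊥, bot_le⟩ := Subtype.ext h
            rw [← ι.apply_symm_apply t, h3, hι0]
          · right
            have h3 : ι.symm t = ⟨q, hq⟩ := Subtype.ext h
            rw [← ι.apply_symm_apply t, h3]
        have hne : ι ⟨q, hq⟩ ≠ ∅ := by
          intro h
          apply hq0
          have : (⟨q, hq⟩ : Set.Iic u) = ⟨⊥, bot_le⟩ := ι.injective (by rw [h, hι0])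
          exact congrArg Subtype.val this
        obtain ⟨i, hi⟩ := Finset.nonempty_iff_ne_empty.mpr hne
        rcases hsub {i} (Finset.singleton_subset_iff.mpr hi) with h | h
        · exact absurd h (Finset.singleton_ne_empty i)
        · exact ⟨i, h.symm⟩
      -- elements corresponding to singletons are atoms
      have hatomO : ∀ i : Fin k, ((ι.symm {i} : Set.Iic u) : P) ≠ ⊥ ∧
          ∀ x, x ≤ ((ι.symm {i} : Set.Iic u) : P) → x = ⊥ ∨ x = ((ι.symm {i} : Set.Iic u) : P) := by
        intro i
        constructor
        · intro h
          have h3 : ι.symm ({i} : Finset (Fin k)) = ⟨⊥, bot_le⟩ := Subtype.ext h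
          have h4 := congrArg ι h3
          rw [ι.apply_symm_apply, hι0] at h4
          exact Finset.singleton_ne_empty i h4
        · intro x hx
          have hxu : x ≤ u := le_trans hx (ι.symm {i}).2
          have hsub : ι ⟨x, hxu⟩ ⊆ {i} := by
            have h1 : (⟨x, hxu⟩ : Set.Iic u) ≤ ι.symm {i} := hx
            have h2 := ι.le_iff_le.mpr h1
            rwa [ι.apply_symm_apply] at h2
          rcases Finset.subset_singleton_iff.mp hsub with h | h
          · left
            have h3 : (⟨x, hxu⟩ : Set.Iic u) = ⟨⊥, bot_le⟩ := ι.injective (by rw [h, hι0])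
            exact congrArg Subtype.val h3
          · right
            have h3 : (⟨x, hxu⟩ : Set.Iic u) = ι.symm {i} := by
              apply ι.injective
              rw [h, ι.apply_symm_apply]
            exact congrArg Subtype.val h3
      by_cases hatp : ∀ x, x ≤ p → x = ⊥ ∨ x = p
      · -- p is an atom
        by_cases heqq : g • p = p
        · exact heqq
        exfalso
        have hgp0 : g • p ≠ ⊥ := by
          intro h
          apply hp0
          have h2 := congrArg (fun x => g⁻¹ • x) h
          simpa [smul_bot_fix hact] using h2
        have hatgp : ∀ x, x ≤ g • p → x = ⊥ ∨ x = g • p := by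
          intro x hx
          have h1 : g⁻¹ • x ≤ p := by
            rw [hact g, smul_inv_smul]; exact hx
          rcases hatp _ h1 with h | h
          · left
            have h2 := congrArg (fun y => g • y) h
            simpa [smul_bot_fix hact] using h2
          · right
            have h2 := congrArg (fun y => g • y) h
            simpa using h2
        obtain ⟨i, hi⟩ := hsing p hpu hp0 hatp
        obtain ⟨j, hj⟩ := hsing (g • p) hgpu hgp0 hatgp
        have hij : i ≠ j := by
          rintro rfl
          apply heqq
          have h3 : (⟨g • p, hgpu⟩ : Set.Iic u) = ⟨p, hpu⟩ := ι.injective (by rw [hi, hj])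
          exact congrArg Subtype.val h3
        have hru : ((ι.symm ({i, j} : Finset (Fin k)) : Set.Iic u) : P) ≤ u :=
          (ι.symm ({i, j} : Finset (Fin k))).2
        set r : P := ((ι.symm ({i, j} : Finset (Fin k)) : Set.Iic u) : P) with hr
        have hpr : p ≤ r := by
          have h1 : (⟨p, hpu⟩ : Set.Iic u) = ι.symm {i} := by
            apply ι.injective; rw [hi, ι.apply_symm_apply]
          have h2 : ι.symm ({i} : Finset (Fin k)) ≤ ι.symm {i, j} := by
            apply ι.symm.le_iff_le.mpr; simp
          calc p = ((ι.symm ({i} : Finset (Fin k)) : Set.Iic u) : P) := congrArg Subtype.val h1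
            _ ≤ r := h2
        have hgpr : g • p ≤ r := by
          have h1 : (⟨g • p, hgpu⟩ : Set.Iic u) = ι.symm {j} := by
            apply ι.injective; rw [hj, ι.apply_symm_apply]
          have h2 : ι.symm ({j} : Finset (Fin k)) ≤ ι.symm {i, j} := by
            apply ι.symm.le_iff_le.mpr; simp
          calc g • p = ((ι.symm ({j} : Finset (Fin k)) : Set.Iic u) : P) := congrArg Subtype.val h1
            _ ≤ r := h2
        set mkk : P → Quotient (MulAction.orbitRel G P) := Quotient.mk (MulAction.orbitRel G P)
          with hmkdef
        obtain ⟨m', e, he⟩ := hbool (mkk r)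
        have d01 : mkk ⊥ ≠ mkk p := by
          intro h
          obtain ⟨h', hh⟩ := (mk_eq_mk_iff (⊥ : P) p).mp h
          apply hp0
          have h2 := congrArg (fun y => h'⁻¹ • y) hh
          simpa [smul_bot_fix hact] using h2
        have d02 : mkk ⊥ ≠ mkk r := by
          intro h
          obtain ⟨h', hh⟩ := (mk_eq_mk_iff (⊥ : P) r).mp h
          have hrbot : r = ⊥ := by
            have h2 := congrArg (fun y => h'⁻¹ • y) hh
            simpa [smul_bot_fix hact] using h2
          exact hp0 (le_antisymm (hrbot ▸ hpr) bot_le)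
        have d12 : mkk p ≠ mkk r := by
          intro h
          obtain ⟨h', hh⟩ := (mk_eq_mk_iff p r).mp h
          have hratom : ∀ x, x ≤ r → x = ⊥ ∨ x = r := by
            intro x hx
            have h1 : h' • x ≤ p := by rw [← hh, ← hact]; exact hx
            rcases hatp _ h1 with h2 | h2
            · left
              have h3 := congrArg (fun y => h'⁻¹ • y) h2
              simpa [smul_bot_fix hact] using h3
            · right
              rw [← hh] at h2
              exact smul_left_cancel h' h2
          rcases hratom p hpr with h2 | h2
          · exact hp0 h2
          · rw [← h2] at hgpr
            rcases hatp _ hgpr with h3 | h3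
            · exact hgp0 h3
            · exact heqq h3
        have hQle : ∀ x : P, x ≤ r → QLe (mkk x) (mkk r) := fun x hx => ⟨x, r, rfl, rfl, hx⟩
        set F : Fin 3 → {Y : Quotient (MulAction.orbitRel G P) // QLe Y (mkk r)} :=
          ![⟨mkk ⊥, hQle ⊥ bot_le⟩, ⟨mkk p, hQle p hpr⟩, ⟨mkk r, hQle r le_rfl⟩] with hF
        have hFinj : Function.Injective F := by
          intro a b hab
          fin_cases a <;> fin_cases b <;>
            simp only [hF, Subtype.ext_iff, Matrix.cons_val_zero, Matrix.cons_val_one,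
              Matrix.head_cons, Matrix.cons_val_two, Matrix.tail_cons] at hab <;>
            first
              | rfl
              | exact absurd hab d01 | exact absurd hab d02 | exact absurd hab d12
              | exact absurd hab.symm d01 | exact absurd hab.symm d02 | exact absurd hab.symm d12
        have hFsurj : Function.Surjective F := by
          rintro ⟨Y, a, b, ha, hb, hab⟩
          obtain ⟨h, rfl⟩ := (mk_eq_mk_iff b r).mp hb
          have hc : h⁻¹ • a ≤ r := by
            have h2 := move_le hact 1 h a r (by simpa using hab)
            simpa using h2
          have hcY : mkk (h⁻¹ • a) = Y := by
            rw [← ha]; exact (mk_eq_mk_iff _ _).mpr ⟨h⁻¹, rfl⟩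
          have hcu : h⁻¹ • a ≤ u := le_trans hc hru
          have hsubt : ι ⟨h⁻¹ • a, hcu⟩ ⊆ {i, j} := by
            have h1 : (⟨h⁻¹ • a, hcu⟩ : Set.Iic u) ≤ ι.symm {i, j} := hc
            have h2 := ι.le_iff_le.mpr h1
            rwa [ι.apply_symm_apply] at h2
          by_cases hit : i ∈ ι ⟨h⁻¹ • a, hcu⟩ <;> by_cases hjt : j ∈ ι ⟨h⁻¹ • a, hcu⟩
          · refine ⟨2, Subtype.ext ?_⟩
            show mkk r = Y
            rw [← hcY]
            congr 1
            have h4 : ι ⟨h⁻¹ • a, hcu⟩ = {i, j} := by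
              refine Finset.Subset.antisymm hsubt ?_
              intro x hx
              rcases Finset.mem_insert.mp hx with h5 | h5
              · exact h5 ▸ hit
              · exact (Finset.mem_singleton.mp h5) ▸ hjt
            have h3 : (⟨h⁻¹ • a, hcu⟩ : Set.Iic u) = ι.symm {i, j} := by
              apply ι.injective; rw [h4, ι.apply_symm_apply]
            exact (congrArg Subtype.val h3).symm
          · refine ⟨1, Subtype.ext ?_⟩
            show mkk p = Y
            rw [← hcY]
            congr 1
            have h4 : ι ⟨h⁻¹ • a, hcu⟩ = {i} := by
              refine Finset.Subset.antisymm ?_ (Finset.singleton_subset_iff.mpr hit)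
              intro x hx
              rcases Finset.mem_insert.mp (hsubt hx) with h5 | h5
              · exact h5 ▸ Finset.mem_singleton_self i
              · exact absurd ((Finset.mem_singleton.mp h5) ▸ hx) hjt
            have h3 : (⟨h⁻¹ • a, hcu⟩ : Set.Iic u) = ⟨p, hpu⟩ := by
              apply ι.injective; rw [h4, hi]
            exact (congrArg Subtype.val h3).symm
          · refine ⟨1, Subtype.ext ?_⟩
            show mkk p = Y
            rw [← hcY]
            have h4 : ι ⟨h⁻¹ • a, hcu⟩ = {j} := by
              refine Finset.Subset.antisymm ?_ (Finset.singleton_subset_iff.mpr hjt)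
              intro x hx
              rcases Finset.mem_insert.mp (hsubt hx) with h5 | h5
              · exact absurd (h5 ▸ hx) hit
              · exact h5
            have h3 : (⟨h⁻¹ • a, hcu⟩ : Set.Iic u) = ⟨g • p, hgpu⟩ := by
              apply ι.injective; rw [h4, hj]
            have h6 : h⁻¹ • a = g • p := congrArg Subtype.val h3
            rw [h6]
            exact ((mk_eq_mk_iff _ _).mpr ⟨g, rfl⟩).symm
          · refine ⟨0, Subtype.ext ?_⟩
            show mkk ⊥ = Y
            rw [← hcY]
            congr 1
            have h4 : ι ⟨h⁻¹ • a, hcu⟩ = ∅ := by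
              rw [Finset.eq_empty_iff_forall_notMem]
              intro x hx
              rcases Finset.mem_insert.mp (hsubt hx) with h5 | h5
              · exact hit (h5 ▸ hx)
              · exact hjt ((Finset.mem_singleton.mp h5) ▸ hx)
            have h3 : (⟨h⁻¹ • a, hcu⟩ : Set.Iic u) = ⟨⊥, bot_le⟩ := by
              apply ι.injective; rw [h4, hι0]
            exact (congrArg Subtype.val h3).symm
        have card3 : Nat.card {Y : Quotient (MulAction.orbitRel G P) // QLe Y (mkk r)} = 3 :=
          Nat.card_eq_of_equiv_fin (Equiv.ofBijective F ⟨hFinj, hFsurj⟩).symm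
        have card2 : Nat.card {Y : Quotient (MulAction.orbitRel G P) // QLe Y (mkk r)} = 2 ^ m' := by
          rw [Nat.card_congr e, Nat.card_eq_fintype_card, Fintype.card_finset, Fintype.card_fin]
        rw [card3] at card2
        rcases Nat.lt_or_ge m' 2 with hm | hm
        · interval_cases m' <;> norm_num at card2
        · have h4 : 2 ^ 2 ≤ 2 ^ m' := Nat.pow_le_pow_right (by norm_num) hm
          rw [← card2] at h4
          norm_num at h4
      · -- p is not an atom
        push_neg at hatp
        obtain ⟨w, hwp, hw0, hwne⟩ := hatp
        have hcard_gp : (Set.Iic (g • p)).ncard = (Set.Iic p).ncard := by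
          have himg : Set.Iic (g • p) = (fun x => g • x) '' Set.Iic p := by
            ext x
            simp only [Set.mem_Iic, Set.mem_image]
            constructor
            · intro hx
              refine ⟨g⁻¹ • x, ?_, by simp⟩
              rw [hact g, smul_inv_smul]; exact hx
            · rintro ⟨y, hy, rfl⟩
              exact (hact g y p).mp hy
          rw [himg, Set.ncard_image_of_injective _ (MulAction.injective g)]
        have hsub1 : ι ⟨p, hpu⟩ ⊆ ι ⟨g • p, hgpu⟩ := by
          intro i hi
          have hap : ((ι.symm {i} : Set.Iic u) : P) ≤ p := by
            have h2 : ι.symm ({i} : Finset (Fin k)) ≤ ι.symm (ι ⟨p, hpu⟩) :=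
              ι.symm.le_iff_le.mpr (Finset.singleton_subset_iff.mpr hi)
            rwa [ι.symm_apply_apply] at h2
          have hanp : ((ι.symm {i} : Set.Iic u) : P) ≠ p := by
            intro h
            rcases (hatomO i).2 w (h ▸ hwp) with h2 | h2
            · exact hw0 h2
            · exact hwne (h2.trans h)
          have hlt : (Set.Iic ((ι.symm {i} : Set.Iic u) : P)).ncard < (Set.Iic p).ncard := by
            apply Set.ncard_lt_ncard _ (hfin p)
            rw [Set.ssubset_iff_subset_ne]
            refine ⟨Set.Iic_subset_Iic.mpr hap, ?_⟩
            intro h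
            apply hanp
            apply le_antisymm hap
            have : p ∈ Set.Iic ((ι.symm {i} : Set.Iic u) : P) := h ▸ Set.mem_Iic.mpr le_rfl
            exact this
          have hfix : g • ((ι.symm {i} : Set.Iic u) : P) = ((ι.symm {i} : Set.Iic u) : P) :=
            IH _ (by omega) g u (le_trans hap hpu) (le_trans ((hact g _ p).mp hap) hgpu)
          have hagp : ((ι.symm {i} : Set.Iic u) : P) ≤ g • p := by
            rw [← hfix]; exact (hact g _ p).mp hap
          have h1 : ι.symm ({i} : Finset (Fin k)) ≤ ⟨g • p, hgpu⟩ := hagp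
          have h3 := ι.le_iff_le.mpr h1
          rw [ι.apply_symm_apply] at h3
          exact Finset.singleton_subset_iff.mp h3
        have hsub2 : ι ⟨g • p, hgpu⟩ ⊆ ι ⟨p, hpu⟩ := by
          intro i hi
          have hagp : ((ι.symm {i} : Set.Iic u) : P) ≤ g • p := by
            have h2 : ι.symm ({i} : Finset (Fin k)) ≤ ι.symm (ι ⟨g • p, hgpu⟩) :=
              ι.symm.le_iff_le.mpr (Finset.singleton_subset_iff.mpr hi)
            rwa [ι.symm_apply_apply] at h2
          have hanp : ((ι.symm {i} : Set.Iic u) : P) ≠ g • p := by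
            intro h
            have hgpat := h ▸ (hatomO i).2
            rcases hgpat (g • w) ((hact g w p).mp hwp) with h2 | h2
            · apply hw0
              have h3 := congrArg (fun y => g⁻¹ • y) h2
              simpa [smul_bot_fix hact] using h3
            · exact hwne (smul_left_cancel g h2)
          have hlt : (Set.Iic ((ι.symm {i} : Set.Iic u) : P)).ncard < (Set.Iic p).ncard := by
            rw [← hcard_gp]
            apply Set.ncard_lt_ncard _ (hfin (g • p))
            rw [Set.ssubset_iff_subset_ne]
            refine ⟨Set.Iic_subset_Iic.mpr hagp, ?_⟩
            intro h
            apply hanp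
            apply le_antisymm hagp
            have : g • p ∈ Set.Iic ((ι.symm {i} : Set.Iic u) : P) := h ▸ Set.mem_Iic.mpr le_rfl
            exact this
          have hfix : g⁻¹ • ((ι.symm {i} : Set.Iic u) : P) = ((ι.symm {i} : Set.Iic u) : P) := by
            refine IH _ (by omega) g⁻¹ u (le_trans hagp hgpu) ?_
            have h2 : g⁻¹ • ((ι.symm {i} : Set.Iic u) : P) ≤ g⁻¹ • (g • p) :=
              (hact g⁻¹ _ _).mp hagp
            rw [inv_smul_smul] at h2
            exact le_trans h2 hpu
          have hap : ((ι.symm {i} : Set.Iic u) : P) ≤ p := by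
            have h2 : g⁻¹ • ((ι.symm {i} : Set.Iic u) : P) ≤ g⁻¹ • (g • p) :=
              (hact g⁻¹ _ _).mp hagp
            rw [inv_smul_smul, hfix] at h2
            exact h2
          have h1 : ι.symm ({i} : Finset (Fin k)) ≤ ⟨p, hpu⟩ := hap
          have h3 := ι.le_iff_le.mpr h1
          rw [ι.apply_symm_apply] at h3
          exact Finset.singleton_subset_iff.mp h3
        have h5 : (⟨p, hpu⟩ : Set.Iic u) = ⟨g • p, hgpu⟩ :=
          ι.injective (Finset.Subset.antisymm hsub1 hsub2)
        exact (congrArg Subtype.val h5).symm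
  intro p g ⟨u, hpu, hgpu⟩
  exact key ((Set.Iic p).ncard) p le_rfl g u hpu hgpu

end Reverse

section Forward
variable {G P : Type*} [Group G] [PartialOrder P] [OrderBot P] [MulAction G P]
variable (hact : ∀ (g : G) (x y : P), x ≤ y ↔ g • x ≤ g • y)
variable (htr : ∀ (p : P) (g : G), (∃ u : P, p ≤ u ∧ g • p ≤ u) → g • p = p)

include hact htr in
lemma qle_le {p : P} (q q' : P) (hq : q ≤ p) (hq' : q' ≤ p)
    (h : QLe (Quotient.mk (MulAction.orbitRel G P) q) (Quotient.mk (MulAction.orbitRel G P) q')) :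
    q ≤ q' := by
  obtain ⟨a, b, ha, hb, hab⟩ := h
  obtain ⟨g, rfl⟩ := (mk_eq_mk_iff a q).mp ha
  obtain ⟨k, rfl⟩ := (mk_eq_mk_iff b q').mp hb
  have h2 : (k⁻¹ * g) • q ≤ q' := move_le hact g k q q' hab
  have h3 : (k⁻¹ * g) • q = q := htr q (k⁻¹ * g) ⟨p, hq, le_trans h2 hq'⟩
  rwa [h3] at h2

include hact htr in
lemma q_antisymm (X Y : Quotient (MulAction.orbitRel G P)) (hXY : QLe X Y) (hYX : QLe Y X) :
    X = Y := by
  obtain ⟨a, b, ha, hb, hab⟩ := hXY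
  obtain ⟨c, d, hc, hd, hcd⟩ := hYX
  obtain ⟨g, rfl⟩ := (mk_eq_mk_iff c b).mp (hc.trans hb.symm)
  obtain ⟨k, rfl⟩ := (mk_eq_mk_iff d a).mp (hd.trans ha.symm)
  have h2 : (k⁻¹ * g) • b ≤ a := move_le hact g k b a hcd
  have h3 : (k⁻¹ * g) • b = b := htr b (k⁻¹ * g) ⟨b, le_refl b, le_trans h2 hab⟩
  rw [h3] at h2
  rw [← ha, ← hb, le_antisymm hab h2]

include hact htr in
lemma q_boolean (hsimp : ∀ p : P, ∃ m : ℕ, Nonempty (Set.Iic p ≃o Finset (Fin m)))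
    (X : Quotient (MulAction.orbitRel G P)) : ∃ m : ℕ,
        ∃ e : {Y : Quotient (MulAction.orbitRel G P) // QLe Y X} ≃ Finset (Fin m),
          ∀ A B : {Y : Quotient (MulAction.orbitRel G P) // QLe Y X},
            QLe A.1 B.1 ↔ e A ≤ e B := by
  obtain ⟨p, rfl⟩ := Quotient.exists_rep X
  obtain ⟨m, ⟨ι⟩⟩ := hsimp p
  set mk : P → Quotient (MulAction.orbitRel G P) := Quotient.mk (MulAction.orbitRel G P) with hmk
  refine ⟨m, ?_⟩
  set f : Set.Iic p → {Y // QLe Y (mk p)} :=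
    fun q => ⟨mk q.1, q.1, p, rfl, rfl, q.2⟩ with hf
  have horder : ∀ q q' : Set.Iic p, QLe (mk q.1) (mk q'.1) ↔ q ≤ q' := by
    intro q q'
    constructor
    · intro h
      exact qle_le hact htr q.1 q'.1 q.2 q'.2 h
    · intro h
      exact ⟨q.1, q'.1, rfl, rfl, h⟩
  have hbij : Function.Bijective f := by
    constructor
    · intro q q' h
      have h1 : mk q.1 = mk q'.1 := congrArg Subtype.val h
      have h2 := horder q q'
      have h3 := horder q' q
      rw [h1] at h2
      exact le_antisymm (h2.mp ⟨q'.1, q'.1, rfl, rfl, le_refl _⟩)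
        (h3.mp (h1 ▸ ⟨q.1, q.1, rfl, rfl, le_refl _⟩))
    · rintro ⟨Y, a, b, ha, hb, hab⟩
      obtain ⟨h, rfl⟩ := (mk_eq_mk_iff b p).mp hb
      have hc : h⁻¹ • a ≤ p := by
        have := move_le hact 1 h a p (by simpa using hab)
        simpa using this
      refine ⟨⟨h⁻¹ • a, hc⟩, Subtype.ext ?_⟩
      show mk (h⁻¹ • a) = Y
      rw [← ha]
      exact (mk_eq_mk_iff _ _).mpr ⟨h⁻¹, rfl⟩
  refine ⟨(Equiv.ofBijective f hbij).symm.trans ι.toEquiv, ?_⟩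
  intro A B
  have hA : f ((Equiv.ofBijective f hbij).symm A) = A := (Equiv.ofBijective f hbij).apply_symm_apply A
  have hB : f ((Equiv.ofBijective f hbij).symm B) = B := (Equiv.ofBijective f hbij).apply_symm_apply B
  rw [← hA, ← hB]
  show QLe (mk _) (mk _) ↔ _
  rw [horder]
  simp [hA, hB, ι.le_iff_le]

end Forward


/-- Let `G` act by order automorphisms on a simplicial poset `P`
(a countable finite-length poset with `⊥` all of whose lower intervals are Boolean
algebras).  Then the quotient `P/G` is a simplicial poset (the orbit relation is
antisymmetric and all its lower intervals are Boolean algebras) if and only if the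
action is translative. -/
theorem quotient_simplicial_iff_translative
    {G P : Type*} [Group G] [PartialOrder P] [OrderBot P] [Countable P] [MulAction G P]
    (hact : ∀ (g : G) (x y : P), x ≤ y ↔ g • x ≤ g • y)
    (n : ℕ)
    (hlen : ∀ c : Finset P, IsChain (· ≤ ·) (c : Set P) → c.card ≤ n + 1)
    (hsimp : ∀ p : P, ∃ m : ℕ, Nonempty (Set.Iic p ≃o Finset (Fin m))) :
    (∀ (p : P) (g : G), (∃ u : P, p ≤ u ∧ g • p ≤ u) → g • p = p) ↔
    ((∀ X Y : Quotient (MulAction.orbitRel G P), QLe X Y → QLe Y X → X = Y) ∧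
      ∀ X : Quotient (MulAction.orbitRel G P), ∃ m : ℕ,
        ∃ e : {Y : Quotient (MulAction.orbitRel G P) // QLe Y X} ≃ Finset (Fin m),
          ∀ A B : {Y : Quotient (MulAction.orbitRel G P) // QLe Y X},
            QLe A.1 B.1 ↔ e A ≤ e B) := by
  constructor
  · intro htr
    exact ⟨q_antisymm hact htr, q_boolean hact htr hsimp⟩
  · rintro ⟨hanti, hbool⟩ p g hu
    exact reverse_main hact hsimp hbool p g hu
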